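/- There is a universal constant C > 0 such that the following holds. Let μ be an arbitrary probability measure on {0,1}^n, let f : {0,1}^n → {0,1}, let t ≥ 1 be an integer, let ε ∈ (0,1/2], and let k be an integer with k ≥ C·(t/ε)·log(2t/ε). Then there exists b ∈ {0,1} such that Pr_{S∼μ^(k)}[ for all ℓ ≤ t, I_S^{b,ℓ}(f) ≥ 1 − ε ] ≥ 1 − ε. -/

import Mathlib

open MeasureTheory

/-- Influence of coalition `S` towards value `b`. -/
noncomputable def infl {ι : Type*} {α : Type*} (μ : Measure (ι → Bool))
    (f : (ι → Bool) → α) (S : Finset ι) (b : α) : ℝ :=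
  (μ {x | ∃ y, (∀ j ∉ S, y j = x j) ∧ f y = b}).toReal

/-- The boosted measure `μ^(t)`: the distribution of `x¹ ∨ ⋯ ∨ xᵗ` for i.i.d. `xⁱ ∼ μ`. -/
noncomputable def boost {n : ℕ} (μ : Measure (Fin n → Bool)) (t : ℕ) :
    Measure (Fin n → Bool) :=
  (Measure.pi fun _ : Fin t => μ).map (fun xs i => Finset.univ.sup fun j => xs j i)

/-- The support of `x ∈ {0,1}^n` viewed as a subset of `[n]`. -/
def supp {n : ℕ} (x : Fin n → Bool) : Finset (Fin n) :=
  Finset.univ.filter fun i => x i = true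

/-- Coordinatewise OR. -/
def orv {n : ℕ} (x y : Fin n → Bool) : Fin n → Bool := fun i => x i || y i

/-- The boosted influence `I_S^{b,t}(f)` of coalition `S` towards `b`,
measured with respect to `μ^(t)`. -/
noncomputable def inflB {n : ℕ} {α : Type*} (μ : Measure (Fin n → Bool))
    (f : (Fin n → Bool) → α) (S : Finset (Fin n)) (b : α) (t : ℕ) : ℝ :=
  infl (boost μ t) f S b

namespace BBI

lemma measAll {α : Type*} [MeasurableSpace α] [Countable α] [MeasurableSingletonClass α]
    (s : Set α) : MeasurableSet s := s.to_countable.measurableSet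

lemma measF {α β : Type*} [MeasurableSpace α] [MeasurableSpace β] [Countable α]
    [MeasurableSingletonClass α] (f : α → β) : Measurable f := measurable_of_countable f

variable {n : ℕ}

noncomputable def conv (μ ν : Measure (Fin n → Bool)) : Measure (Fin n → Bool) :=
  (μ.prod ν).map (fun p => orv p.1 p.2)

noncomputable def orAll {r : ℕ} (ws : Fin r → Fin n → Bool) : Fin n → Bool :=
  fun i => Finset.univ.sup fun j => ws j i

noncomputable def boostGen (ν : Measure (Fin n → Bool)) (r : ℕ) : Measure (Fin n → Bool) :=
  (Measure.pi fun _ : Fin r => ν).map orAll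

lemma boost_eq_gen (μ : Measure (Fin n → Bool)) (m : ℕ) : boost μ m = boostGen μ m := rfl

lemma boostGen_prob (ν : Measure (Fin n → Bool)) [IsProbabilityMeasure ν] (r : ℕ) :
    IsProbabilityMeasure (boostGen ν r) :=
  Measure.isProbabilityMeasure_map (measF _).aemeasurable

lemma boost_prob (μ : Measure (Fin n → Bool)) [IsProbabilityMeasure μ] (m : ℕ) :
    IsProbabilityMeasure (boost μ m) := boostGen_prob μ m

lemma conv_prob (μ ν : Measure (Fin n → Bool)) [IsProbabilityMeasure μ]
    [IsProbabilityMeasure ν] : IsProbabilityMeasure (conv μ ν) :=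
  Measure.isProbabilityMeasure_map (measF _).aemeasurable

lemma orAll_succ {r : ℕ} (xs : Fin (r + 1) → Fin n → Bool) :
    orAll xs = orv (xs 0) (orAll fun j => xs j.succ) := by
  funext i
  show (Finset.univ.sup fun j => xs j i) = _
  rw [Fin.univ_succ, Finset.sup_cons, Finset.sup_map]
  rfl

lemma le_orAll {r : ℕ} (ws : Fin r → Fin n → Bool) (j : Fin r) (i : Fin n)
    (h : ws j i = true) : orAll ws i = true :=
  Bool.le_iff_imp.mp (Finset.le_sup (f := fun j' => ws j' i) (Finset.mem_univ j)) h

lemma boostGen_zero (ν : Measure (Fin n → Bool)) :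
    boostGen ν 0 = Measure.dirac (fun _ => false) := by
  unfold boostGen
  rw [Measure.pi_of_empty, Measure.map_dirac' (measF _)]
  congr 1

lemma boostGen_succ (ν : Measure (Fin n → Bool)) [IsProbabilityMeasure ν] (r : ℕ) :
    boostGen ν (r + 1) = conv ν (boostGen ν r) := by
  have hpres := (measurePreserving_piFinSuccAbove (fun _ : Fin (r + 1) =>
    (ν : Measure (Fin n → Bool))) 0).map_eq
  have h1 : boostGen ν (r + 1)
      = ((Measure.pi fun _ : Fin (r + 1) => ν).map
          (MeasurableEquiv.piFinSuccAbove (fun _ => Fin n → Bool) 0)).map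
          (fun p => orv p.1 (orAll p.2)) := by
    rw [Measure.map_map (measF _) (measF _)]
    unfold boostGen
    congr 1
    funext xs
    show orAll xs = orv _ (orAll _)
    simp [MeasurableEquiv.piFinSuccAbove, Fin.zero_succAbove]; exact orAll_succ xs
  rw [h1, hpres]
  unfold conv boostGen
  rw [show ν = ν.map id from (Measure.map_id).symm]
  rw [Measure.map_prod_map _ _ measurable_id (measF _), Measure.map_map (measF _) (measF _),
    Measure.map_id]
  rfl
lemma orv_comm (x y : Fin n → Bool) : orv x y = orv y x := by
  funext i; exact Bool.or_comm _ _

lemma conv_dirac_bot (μ : Measure (Fin n → Bool)) [IsProbabilityMeasure μ] :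
    conv μ (Measure.dirac (fun _ => false)) = μ := by
  unfold conv
  rw [Measure.prod_dirac, Measure.map_map (measF _) (measF _)]
  have h : ((fun p : (Fin n → Bool) × (Fin n → Bool) => orv p.1 p.2) ∘
      fun x => (x, fun _ => false)) = id := by
    funext x
    show orv x (fun _ => false) = x
    funext i
    simp [orv]
  rw [h, Measure.map_id]

lemma conv_comm (μ ν : Measure (Fin n → Bool)) [IsProbabilityMeasure μ]
    [IsProbabilityMeasure ν] : conv μ ν = conv ν μ := by
  unfold conv
  rw [← Measure.prod_swap, Measure.map_map (measF _) (measF _)]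
  congr 1
  funext p
  show orv p.2 p.1 = orv p.1 p.2
  exact orv_comm _ _

lemma conv_assoc (a b c : Measure (Fin n → Bool)) [IsProbabilityMeasure a]
    [IsProbabilityMeasure b] [IsProbabilityMeasure c] :
    conv (conv a b) c = conv a (conv b c) := by
  unfold conv
  rw [show c = c.map id from (Measure.map_id).symm]
  rw [Measure.map_prod_map _ _ (measF _) measurable_id, Measure.map_map (measF _) (measF _)]
  rw [show a = a.map id from (Measure.map_id).symm]
  rw [Measure.map_prod_map _ _ measurable_id (measF _), Measure.map_map (measF _) (measF _)]
  rw [Measure.map_id, Measure.map_id]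
  rw [← (measurePreserving_prodAssoc a b c).map_eq, Measure.map_map (measF _) (measF _)]
  congr 1
  funext p
  show orv (orv p.1.1 p.1.2) p.2 = orv p.1.1 (orv p.1.2 p.2)
  funext i
  exact Bool.or_assoc _ _ _

lemma conv_left_comm (a b c : Measure (Fin n → Bool)) [IsProbabilityMeasure a]
    [IsProbabilityMeasure b] [IsProbabilityMeasure c] :
    conv a (conv b c) = conv b (conv a c) := by
  haveI := conv_prob b c
  haveI := conv_prob a c
  rw [← conv_assoc, conv_comm a b, conv_assoc]

lemma boost_add (μ : Measure (Fin n → Bool)) [IsProbabilityMeasure μ] (a b : ℕ) :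
    boost μ (a + b) = conv (boost μ a) (boost μ b) := by
  haveI := boost_prob μ a
  induction b with
  | zero =>
      rw [Nat.add_zero, boost_eq_gen μ 0, boostGen_zero, conv_dirac_bot]
  | succ b ih =>
      haveI := boost_prob μ b
      rw [show a + (b + 1) = (a + b) + 1 from rfl, boost_eq_gen μ ((a+b)+1), boostGen_succ,
        ← boost_eq_gen, ih, boost_eq_gen μ (b+1), boostGen_succ, ← boost_eq_gen]
      exact conv_left_comm μ (boost μ a) (boost μ b)

lemma boostGen_boost (μ : Measure (Fin n → Bool)) [IsProbabilityMeasure μ] (ℓ r : ℕ) :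
    boostGen (boost μ ℓ) r = boost μ (r * ℓ) := by
  haveI := boost_prob μ ℓ
  induction r with
  | zero => rw [boostGen_zero, Nat.zero_mul, boost_eq_gen, boostGen_zero]
  | succ r ih =>
      rw [boostGen_succ, ih, ← boost_add, show ℓ + r * ℓ = (r + 1) * ℓ by ring]

lemma boost_anti (μ : Measure (Fin n → Bool)) [IsProbabilityMeasure μ]
    {A : Set (Fin n → Bool)} (hA : ∀ z w, orv z w ∈ A → z ∈ A) {a m : ℕ} (h : a ≤ m) :
    boost μ m A ≤ boost μ a A := by
  obtain ⟨d, rfl⟩ := Nat.exists_eq_add_of_le h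
  haveI := boost_prob μ a
  haveI := boost_prob μ d
  rw [boost_add]
  unfold conv
  rw [Measure.map_apply (measF _) (measAll _)]
  calc ((boost μ a).prod (boost μ d)) ((fun p => orv p.1 p.2) ⁻¹' A)
      ≤ ((boost μ a).prod (boost μ d)) (A ×ˢ Set.univ) :=
        measure_mono (fun p hp => ⟨hA _ _ hp, trivial⟩)
    _ = boost μ a A := by rw [Measure.prod_prod, measure_univ, mul_one]

lemma boost_pow (μ : Measure (Fin n → Bool)) [IsProbabilityMeasure μ]
    {A : Set (Fin n → Bool)} (hA : ∀ z w, orv z w ∈ A → z ∈ A ∧ w ∈ A) (M : ℕ) :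
    ∀ j, boost μ (j * M) A ≤ (boost μ M A) ^ j := by
  intro j
  induction j with
  | zero =>
      haveI := boost_prob μ (0 * M)
      haveI := boost_prob μ 0
      simpa using prob_le_one
  | succ j ih =>
      haveI := boost_prob μ M
      haveI := boost_prob μ (j * M)
      rw [show (j + 1) * M = M + j * M by ring, boost_add]
      unfold conv
      rw [Measure.map_apply (measF _) (measAll _)]
      calc ((boost μ M).prod (boost μ (j * M))) ((fun p => orv p.1 p.2) ⁻¹' A)
          ≤ ((boost μ M).prod (boost μ (j * M))) (A ×ˢ A) :=
            measure_mono (fun p hp => ⟨(hA _ _ hp).1, (hA _ _ hp).2⟩)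
        _ = boost μ M A * boost μ (j * M) A := Measure.prod_prod _ _
        _ ≤ boost μ M A * (boost μ M A) ^ j := by
            exact mul_le_mul_right ih _
        _ = (boost μ M A) ^ (j + 1) := (pow_succ' _ _).symm
def BadSet (f : (Fin n → Bool) → Bool) (c : Bool) (z : Fin n → Bool) :
    Set (Fin n → Bool) :=
  {x | ∀ y, (∀ j ∉ supp z, y j = x j) → f y = c}

def Qset (μ : Measure (Fin n → Bool)) (f : (Fin n → Bool) → Bool) (c : Bool) (ℓ : ℕ)
    (e : ENNReal) : Set (Fin n → Bool) :=
  {z | e < boost μ ℓ (BadSet f c z)}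

lemma supp_mono_orv (z w : Fin n → Bool) (j : Fin n) (h : j ∈ supp z) :
    j ∈ supp (orv z w) := by
  simp only [supp, Finset.mem_filter, Finset.mem_univ, true_and, orv] at h ⊢
  simp [h]

lemma badset_orv (f : (Fin n → Bool) → Bool) (c : Bool) (z w : Fin n → Bool) :
    BadSet f c (orv z w) ⊆ BadSet f c z := by
  intro x hx y hy
  exact hx y (fun j hj => hy j (fun hmem => hj (supp_mono_orv z w j hmem)))

lemma qset_orv {μ : Measure (Fin n → Bool)} {f : (Fin n → Bool) → Bool} {c : Bool} {ℓ : ℕ}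
    {e : ENNReal} {z w : Fin n → Bool} (h : orv z w ∈ Qset μ f c ℓ e) : z ∈ Qset μ f c ℓ e :=
  lt_of_lt_of_le h (measure_mono (badset_orv f c z w))

lemma not_mem_supp {z : Fin n → Bool} {j : Fin n} (h : j ∉ supp z) : z j = false := by
  simpa [supp] using h

lemma clash (f : (Fin n → Bool) → Bool) (T U x x' : Fin n → Bool)
    (hx : ∀ j, x j = true → U j = true) (hx' : ∀ j, x' j = true → T j = true)
    (hE : ∀ y, (∀ j ∉ supp T, y j = x j) → f y = true)
    (hF : ∀ y, (∀ j ∉ supp U, y j = x' j) → f y = false) : False := by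
  set y : Fin n → Bool := fun j => if T j then (if U j then false else x' j) else x j with hy
  have hT : f y = true := by
    apply hE y
    intro j hj
    have h1 : T j = false := not_mem_supp hj
    simp [hy, h1]
  have hFv : f y = false := by
    apply hF y
    intro j hj
    have hU : U j = false := not_mem_supp hj
    by_cases hTj : T j = true
    · simp [hy, hTj, hU]
    · have hTj' : T j = false := by simpa using hTj
      have hxj : x j = false := by
        cases hxj : x j with
        | false => rfl
        | true => rw [hx j hxj] at hU; exact absurd hU (by simp)
      have hx'j : x' j = false := by
        cases hx'j : x' j with
        | false => rfl
        | true => rw [hx' j hx'j] at hTj'; exact absurd hTj' (by simp)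
      simp [hy, hTj', hxj, hx'j]
  rw [hT] at hFv
  exact absurd hFv (by simp)

lemma lowerE (ν₁ ν₂ : Measure (Fin n → Bool)) [IsProbabilityMeasure ν₁]
    [IsProbabilityMeasure ν₂] (P : (Fin n → Bool) → (Fin n → Bool) → Prop) (e : ENNReal)
    (r : ℕ) :
    (1 - (1 - e) ^ r) * ((Measure.pi fun _ : Fin r => ν₂).map orAll)
        {z | e < ν₁ {x | P z x}}
      ≤ ((Measure.pi fun _ : Fin r => ν₁).prod (Measure.pi fun _ : Fin r => ν₂))
          {ω | ∃ i, P (orAll ω.2) (ω.1 i)} := by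
  set m₁ := Measure.pi fun _ : Fin r => ν₁ with hm₁
  set m₂ := Measure.pi fun _ : Fin r => ν₂ with hm₂
  rw [Measure.prod_apply_symm (measAll _)]
  rw [Measure.map_apply (measF _) (measAll _)]
  set G := orAll ⁻¹' {z | e < ν₁ {x | P z x}} with hG
  have key : ∀ ws ∈ G,
      (1 - (1 - e) ^ r)
        ≤ m₁ ((fun xs => (xs, ws)) ⁻¹' {ω : (Fin r → Fin n → Bool) × (Fin r → Fin n → Bool) |
            ∃ i, P (orAll ω.2) (ω.1 i)}) := by
    intro ws hws
    have hpre : ((fun xs => (xs, ws)) ⁻¹' {ω : (Fin r → Fin n → Bool) × (Fin r → Fin n → Bool) |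
        ∃ i, P (orAll ω.2) (ω.1 i)})
        = {xs : Fin r → Fin n → Bool | ∀ i, xs i ∈ {x | ¬ P (orAll ws) x}}ᶜ := by
      ext xs
      simp [Set.mem_setOf_eq]
    rw [hpre, prob_compl_eq_one_sub (measAll _)]
    have hbox : m₁ {xs : Fin r → Fin n → Bool | ∀ i, xs i ∈ {x | ¬ P (orAll ws) x}}
        = (ν₁ {x | ¬ P (orAll ws) x}) ^ r := by
      have hst : {xs : Fin r → Fin n → Bool | ∀ i, xs i ∈ {x | ¬ P (orAll ws) x}}
          = Set.univ.pi (fun _ : Fin r => {x | ¬ P (orAll ws) x}) := by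
        ext xs; simp [Set.mem_pi]
      rw [hst, hm₁, Measure.pi_pi]
      simp [Finset.prod_const]
    rw [hbox]
    apply tsub_le_tsub_left
    have h1 : ν₁ {x | ¬ P (orAll ws) x} = 1 - ν₁ {x | P (orAll ws) x} := by
      rw [show {x | ¬ P (orAll ws) x} = {x | P (orAll ws) x}ᶜ from rfl,
        prob_compl_eq_one_sub (measAll _)]
    rw [h1]
    have h2 : (1 : ENNReal) - ν₁ {x | P (orAll ws) x} ≤ 1 - e :=
      tsub_le_tsub_left hws.le 1
    exact pow_le_pow_left₀ zero_le h2 r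
  calc (1 - (1 - e) ^ r) * m₂ G
      = ∫⁻ _ in G, (1 - (1 - e) ^ r) ∂m₂ := (setLIntegral_const _ _).symm
    _ ≤ ∫⁻ ws in G, m₁ ((fun xs => (xs, ws)) ⁻¹'
          {ω : (Fin r → Fin n → Bool) × (Fin r → Fin n → Bool) |
            ∃ i, P (orAll ω.2) (ω.1 i)}) ∂m₂ :=
        setLIntegral_mono (measF _) key
    _ ≤ ∫⁻ ws, m₁ ((fun xs => (xs, ws)) ⁻¹'
          {ω : (Fin r → Fin n → Bool) × (Fin r → Fin n → Bool) |
            ∃ i, P (orAll ω.2) (ω.1 i)}) ∂m₂ := setLIntegral_le_lintegral _ _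
lemma dichotomy (μ : Measure (Fin n → Bool)) [IsProbabilityMeasure μ]
    (f : (Fin n → Bool) → Bool) (t r : ℕ) (e : ENNReal)
    (hamp : ENNReal.ofReal (4 / 5) ≤ 1 - (1 - e) ^ r) :
    ∃ b : Bool, ∀ ℓ : ℕ, ℓ ≤ t →
      boost μ (r * t) (Qset μ f (!b) ℓ e) ≤ ENNReal.ofReal (3 / 4) := by
  by_contra hcon
  push_neg at hcon
  obtain ⟨ℓT, hℓT, hT⟩ := hcon false
  obtain ⟨ℓF, hℓF, hF⟩ := hcon true
  rw [Bool.not_false] at hT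
  rw [Bool.not_true] at hF
  haveI := boost_prob μ ℓT
  haveI := boost_prob μ ℓF
  set m₁ := Measure.pi fun _ : Fin r => boost μ ℓT with hm₁
  set m₂ := Measure.pi fun _ : Fin r => boost μ ℓF with hm₂
  set SE : Set ((Fin r → Fin n → Bool) × (Fin r → Fin n → Bool)) :=
    {ω | ∃ i, ω.1 i ∈ BadSet f true (orAll ω.2)} with hSE
  set SF : Set ((Fin r → Fin n → Bool) × (Fin r → Fin n → Bool)) :=
    {ω | ∃ j, ω.2 j ∈ BadSet f false (orAll ω.1)} with hSF
  -- lower bound for SE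
  have hE : ENNReal.ofReal (3 / 5) ≤ (m₁.prod m₂) SE := by
    have h1 := lowerE (boost μ ℓT) (boost μ ℓF)
      (fun z x => x ∈ BadSet f true z) e r
    have h2 : ((Measure.pi fun _ : Fin r => boost μ ℓF).map orAll)
        {z | e < boost μ ℓT {x | x ∈ BadSet f true z}} = boost μ (r * ℓF) (Qset μ f true ℓT e) := by
      rw [show (Measure.pi fun _ : Fin r => boost μ ℓF).map orAll = boostGen (boost μ ℓF) r
        from rfl, boostGen_boost]
      rfl
    rw [h2] at h1
    have h3 : ENNReal.ofReal (3 / 4) ≤ boost μ (r * ℓF) (Qset μ f true ℓT e) :=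
      le_trans hT.le (boost_anti μ (fun z w h => qset_orv h)
        (Nat.mul_le_mul_left r hℓF))
    calc ENNReal.ofReal (3 / 5) = ENNReal.ofReal (4 / 5) * ENNReal.ofReal (3 / 4) := by
          rw [← ENNReal.ofReal_mul (by norm_num)]; norm_num
      _ ≤ (1 - (1 - e) ^ r) * boost μ (r * ℓF) (Qset μ f true ℓT e) :=
          mul_le_mul' hamp h3
      _ ≤ (m₁.prod m₂) SE := h1
  -- lower bound for SF
  have hFlow : ENNReal.ofReal (3 / 5) ≤ (m₁.prod m₂) SF := by
    have h1 := lowerE (boost μ ℓF) (boost μ ℓT)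
      (fun z x => x ∈ BadSet f false z) e r
    have h2 : ((Measure.pi fun _ : Fin r => boost μ ℓT).map orAll)
        {z | e < boost μ ℓF {x | x ∈ BadSet f false z}}
        = boost μ (r * ℓT) (Qset μ f false ℓF e) := by
      rw [show (Measure.pi fun _ : Fin r => boost μ ℓT).map orAll = boostGen (boost μ ℓT) r
        from rfl, boostGen_boost]
      rfl
    rw [h2] at h1
    have h3 : ENNReal.ofReal (3 / 4) ≤ boost μ (r * ℓT) (Qset μ f false ℓF e) :=
      le_trans hF.le (boost_anti μ (fun z w h => qset_orv h)
        (Nat.mul_le_mul_left r hℓT))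
    have hswap : (m₂.prod m₁)
        {σ : (Fin r → Fin n → Bool) × (Fin r → Fin n → Bool) |
          ∃ j, σ.1 j ∈ BadSet f false (orAll σ.2)} = (m₁.prod m₂) SF := by
      rw [← Measure.prod_swap, Measure.map_apply (measF _) (measAll _)]
      congr 1
    calc ENNReal.ofReal (3 / 5) = ENNReal.ofReal (4 / 5) * ENNReal.ofReal (3 / 4) := by
          rw [← ENNReal.ofReal_mul (by norm_num)]; norm_num
      _ ≤ (1 - (1 - e) ^ r) * boost μ (r * ℓT) (Qset μ f false ℓF e) :=
          mul_le_mul' hamp h3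
      _ ≤ (m₂.prod m₁) {σ : (Fin r → Fin n → Bool) × (Fin r → Fin n → Bool) |
          ∃ j, σ.1 j ∈ BadSet f false (orAll σ.2)} := h1
      _ = (m₁.prod m₂) SF := hswap
  -- disjointness
  have hdisj : Disjoint SE SF := by
    rw [Set.disjoint_left]
    rintro ω ⟨i, hi⟩ ⟨j, hj⟩
    exact clash f (orAll ω.2) (orAll ω.1) (ω.1 i) (ω.2 j)
      (fun j0 h => le_orAll ω.1 i j0 h) (fun j0 h => le_orAll ω.2 j j0 h) hi hj
  have hsum : (m₁.prod m₂) SE + (m₁.prod m₂) SF ≤ 1 := by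
    rw [← measure_union hdisj (measAll _)]
    exact prob_le_one
  have : ENNReal.ofReal (3 / 5) + ENNReal.ofReal (3 / 5) ≤ 1 :=
    le_trans (add_le_add hE hFlow) hsum
  rw [← ENNReal.ofReal_add (by norm_num) (by norm_num), ENNReal.ofReal_le_one] at this
  norm_num at this
end BBI

open BBI in
/-- for any Boolean `f` and `k ≳ (t/ε)·log(2t/ε)`, there is `b ∈ {0,1}` such that
with probability `≥ 1 - ε` a random coalition `S ∼ μ^(k)` has `I_S^{b,ℓ}(f) ≥ 1 - ε` for all
`1 ≤ ℓ ≤ t`. -/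
theorem boolean_boosted_influence :
    ∃ C : ℝ, C > 0 ∧
      ∀ n : ℕ, ∀ μ : Measure (Fin n → Bool), IsProbabilityMeasure μ →
      ∀ f : (Fin n → Bool) → Bool,
      ∀ t : ℕ, 1 ≤ t →
      ∀ ε : ℝ, 0 < ε → ε ≤ 1/2 →
      ∀ k : ℕ, (k : ℝ) ≥ C * ((t : ℝ)/ε) * Real.logb 2 (2*t/ε) →
      ∃ b : Bool,
        ((boost μ k) {x | ∀ ℓ : ℕ, 1 ≤ ℓ → ℓ ≤ t → inflB μ f (supp x) b ℓ ≥ 1 - ε}).toReal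
          ≥ 1 - ε := by
  refine ⟨100, by norm_num, ?_⟩
  intro n μ hμ f t ht ε hε hε2 k hk
  haveI := hμ
  set e : ENNReal := ENNReal.ofReal ε with he
  set r : ℕ := ⌈(4:ℝ)/ε⌉₊ with hr
  have hεle1 : ε ≤ 1 := le_trans hε2 (by norm_num)
  have ht1 : (1:ℝ) ≤ (t:ℝ) := by exact_mod_cast ht
  have htpos : (0:ℝ) < (t:ℝ) := by linarith
  -- real inequality for the amplification constant
  have h15 : (1 - ε)^r ≤ 1/5 := by
    have hr4 : (4:ℝ)/ε ≤ (r:ℝ) := Nat.le_ceil _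
    have hrε : (4:ℝ) ≤ (r:ℝ) * ε := by
      have h := mul_le_mul_of_nonneg_right hr4 hε.le
      rwa [div_mul_cancel₀ _ (ne_of_gt hε)] at h
    have hb : (1:ℝ) + (r:ℝ)*ε ≤ (1+ε)^r := one_add_mul_le_pow (by linarith) r
    have h5 : (5:ℝ) ≤ (1+ε)^r := by linarith
    have hmul : (1-ε)^r * (1+ε)^r ≤ 1 := by
      rw [← mul_pow]
      apply pow_le_one₀ (by nlinarith) (by nlinarith)
    have hnn : (0:ℝ) ≤ (1-ε)^r := pow_nonneg (by linarith) r
    nlinarith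
  have hamp : ENNReal.ofReal (4/5) ≤ 1 - (1 - e)^r := by
    have h1e : (1:ENNReal) - e = ENNReal.ofReal (1-ε) := by
      rw [he, ENNReal.ofReal_sub 1 hε.le, ENNReal.ofReal_one]
    rw [h1e, ← ENNReal.ofReal_pow (by linarith) r]
    have h2 : ENNReal.ofReal ((1-ε)^r) ≤ ENNReal.ofReal (1/5) := ENNReal.ofReal_le_ofReal h15
    calc ENNReal.ofReal (4/5) = 1 - ENNReal.ofReal (1/5) := by
          rw [show (4:ℝ)/5 = 1 - 1/5 by norm_num, ENNReal.ofReal_sub 1 (by norm_num),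
            ENNReal.ofReal_one]
      _ ≤ 1 - ENNReal.ofReal ((1-ε)^r) := tsub_le_tsub_left h2 1
  obtain ⟨b, hb⟩ := dichotomy μ f t r e hamp
  refine ⟨b, ?_⟩
  -- numeric bookkeeping
  set L : ℝ := Real.logb 2 (2*(t:ℝ)/ε) with hL
  set j : ℕ := 4 * ⌈L⌉₊ with hj
  have h2tε : (4:ℝ) ≤ 2*(t:ℝ)/ε := by
    rw [le_div_iff₀ hε]; nlinarith
  have h2tpos : (0:ℝ) < 2*(t:ℝ)/ε := by positivity
  have hL2 : (2:ℝ) ≤ L := by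
    have h4 : Real.logb 2 4 = 2 := by
      rw [show (4:ℝ) = 2^(2:ℕ) by norm_num, Real.logb_pow,
        Real.logb_self_eq_one (by norm_num)]
      norm_num
    have h5 := (Real.logb_le_logb (b := 2) (by norm_num) (by norm_num : (0:ℝ) < 4) h2tpos).mpr h2tε
    rw [h4] at h5
    exact h5
  have hLpos : (0:ℝ) < L := by linarith
  have hjMk : j * (r * t) ≤ k := by
    have hjle : (j:ℝ) ≤ 6*L := by
      have hceil : (⌈L⌉₊:ℝ) < L + 1 := Nat.ceil_lt_add_one hLpos.le
      have : (j:ℝ) = 4*(⌈L⌉₊:ℝ) := by rw [hj]; push_cast; ring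
      rw [this]; linarith
    have hrle : (r:ℝ) ≤ 5/ε := by
      have hceil : (r:ℝ) < 4/ε + 1 := Nat.ceil_lt_add_one (by positivity)
      have h1ε : (1:ℝ) ≤ 1/ε := by
        rw [le_div_iff₀ hε]; linarith
      have : 4/ε + 1 ≤ 5/ε := by
        have : (4:ℝ)/ε + 1/ε = 5/ε := by ring
        linarith
      linarith
    have hcast : ((j * (r * t) : ℕ) : ℝ) ≤ (k:ℝ) := by
      push_cast
      have h1 : (j:ℝ) * ((r:ℝ) * (t:ℝ)) ≤ (6*L) * ((5/ε) * (t:ℝ)) := by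
        apply mul_le_mul hjle ?_ (by positivity) (by positivity)
        exact mul_le_mul_of_nonneg_right hrle htpos.le
      have h2 : (6*L) * ((5/ε) * (t:ℝ)) = 30 * ((t:ℝ)/ε) * L := by ring
      have h3 : 30 * ((t:ℝ)/ε) * L ≤ 100 * ((t:ℝ)/ε) * L := by
        have h4 : (0:ℝ) ≤ (t:ℝ)/ε * L := by positivity
        nlinarith
      calc (j:ℝ) * ((r:ℝ) * (t:ℝ)) ≤ 30 * ((t:ℝ)/ε) * L := by linarith
        _ ≤ 100 * ((t:ℝ)/ε) * L := h3
        _ ≤ (k:ℝ) := hk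
    exact_mod_cast hcast
  -- the per-ℓ tail bound
  have hpow : ((3:ℝ)/4)^j ≤ ε/(2*(t:ℝ)) := by
    have hLceil : L ≤ (⌈L⌉₊:ℝ) := Nat.le_ceil L
    have step1 : ((3:ℝ)/4)^j = (((3:ℝ)/4)^4)^(⌈L⌉₊) := by rw [hj, pow_mul]
    have step3 : ((3:ℝ)/4)^j ≤ ((1:ℝ)/2)^(⌈L⌉₊) := by
      rw [step1]
      exact pow_le_pow_left₀ (by positivity) (by norm_num) _
    have step5 : ((1:ℝ)/2)^((⌈L⌉₊:ℕ):ℝ) ≤ ((1:ℝ)/2)^(L:ℝ) :=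
      Real.rpow_le_rpow_of_exponent_ge (by norm_num) (by norm_num) hLceil
    have step6 : ((1:ℝ)/2)^(L:ℝ) = ε/(2*(t:ℝ)) := by
      rw [show (1:ℝ)/2 = 2⁻¹ by norm_num, Real.inv_rpow (by norm_num),
        hL, Real.rpow_logb (by norm_num) (by norm_num) h2tpos, inv_div]
    rw [← Real.rpow_natCast ((1:ℝ)/2) ⌈L⌉₊] at step3
    linarith
  have hQk : ∀ ℓ ∈ Finset.Icc 1 t, boost μ k (Qset μ f (!b) ℓ e) ≤ ENNReal.ofReal (ε/(2*(t:ℝ))) := by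
    intro ℓ hℓ
    obtain ⟨h1ℓ, hℓt⟩ := Finset.mem_Icc.mp hℓ
    have hA2 : ∀ z w, orv z w ∈ Qset μ f (!b) ℓ e →
        z ∈ Qset μ f (!b) ℓ e ∧ w ∈ Qset μ f (!b) ℓ e :=
      fun z w h => ⟨qset_orv h, qset_orv (by rwa [orv_comm] at h)⟩
    calc boost μ k (Qset μ f (!b) ℓ e)
        ≤ boost μ (j*(r*t)) (Qset μ f (!b) ℓ e) :=
          boost_anti μ (fun z w h => qset_orv h) hjMk
      _ ≤ (boost μ (r*t) (Qset μ f (!b) ℓ e))^j := boost_pow μ hA2 (r*t) j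
      _ ≤ (ENNReal.ofReal (3/4))^j := pow_le_pow_left₀ zero_le (hb ℓ hℓt) j
      _ = ENNReal.ofReal (((3:ℝ)/4)^j) := (ENNReal.ofReal_pow (by norm_num) j).symm
      _ ≤ ENNReal.ofReal (ε/(2*(t:ℝ))) := ENNReal.ofReal_le_ofReal hpow
  -- inclusion of the complement of the target into the union of Q's
  haveI := boost_prob μ k
  set Tset : Set (Fin n → Bool) :=
    {x | ∀ ℓ : ℕ, 1 ≤ ℓ → ℓ ≤ t → inflB μ f (supp x) b ℓ ≥ 1 - ε} with hTset
  have hsub : Tsetᶜ ⊆ ⋃ ℓ ∈ Finset.Icc 1 t, Qset μ f (!b) ℓ e := by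
    intro z hz
    rw [Set.mem_compl_iff, hTset, Set.mem_setOf_eq] at hz
    push_neg at hz
    obtain ⟨ℓ, h1, h2, h3⟩ := hz
    refine Set.mem_biUnion (Finset.mem_Icc.mpr ⟨h1, h2⟩) ?_
    by_contra hle
    simp only [Qset, Set.mem_setOf_eq, not_lt] at hle
    haveI := boost_prob μ ℓ
    have hGc : {x | ∃ y, (∀ j ∉ supp z, y j = x j) ∧ f y = b}ᶜ = BadSet f (!b) z := by
      ext x
      simp only [Set.mem_compl_iff, Set.mem_setOf_eq, not_exists, not_and, BadSet]
      constructor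
      · intro h y hy
        exact Bool.eq_not_iff.mpr (h y hy)
      · intro h y hy hfy
        have := h y hy
        rw [hfy] at this
        simp at this
    have hmeas : boost μ ℓ {x | ∃ y, (∀ j ∉ supp z, y j = x j) ∧ f y = b}
        = 1 - boost μ ℓ (BadSet f (!b) z) := by
      calc boost μ ℓ {x | ∃ y, (∀ j ∉ supp z, y j = x j) ∧ f y = b}
          = boost μ ℓ ({x | ∃ y, (∀ j ∉ supp z, y j = x j) ∧ f y = b}ᶜᶜ) := by
            rw [compl_compl]
        _ = 1 - boost μ ℓ ({x | ∃ y, (∀ j ∉ supp z, y j = x j) ∧ f y = b}ᶜ) :=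
            prob_compl_eq_one_sub (measAll _)
        _ = 1 - boost μ ℓ (BadSet f (!b) z) := by rw [hGc]
    have hgoal : inflB μ f (supp z) b ℓ ≥ 1 - ε := by
      unfold inflB infl
      rw [hmeas]
      have h5 : ENNReal.ofReal (1-ε) ≤ 1 - boost μ ℓ (BadSet f (!b) z) := by
        have h6 : (1:ENNReal) - e ≤ 1 - boost μ ℓ (BadSet f (!b) z) := tsub_le_tsub_left hle 1
        rwa [he, show (1:ENNReal) - ENNReal.ofReal ε = ENNReal.ofReal (1-ε) from by
          rw [ENNReal.ofReal_sub 1 hε.le, ENNReal.ofReal_one]] at h6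
      have h7 := ENNReal.toReal_mono
        (ne_top_of_le_ne_top ENNReal.one_ne_top tsub_le_self) h5
      rwa [ENNReal.toReal_ofReal (by linarith)] at h7
    exact absurd hgoal (not_le.mpr h3)
  have hcompl : boost μ k Tsetᶜ ≤ ENNReal.ofReal ε := by
    calc boost μ k Tsetᶜ
        ≤ boost μ k (⋃ ℓ ∈ Finset.Icc 1 t, Qset μ f (!b) ℓ e) := measure_mono hsub
      _ ≤ ∑ ℓ ∈ Finset.Icc 1 t, boost μ k (Qset μ f (!b) ℓ e) :=
          measure_biUnion_finset_le _ _
      _ ≤ ∑ _ℓ ∈ Finset.Icc 1 t, ENNReal.ofReal (ε/(2*(t:ℝ))) := Finset.sum_le_sum hQk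
      _ = (t:ENNReal) * ENNReal.ofReal (ε/(2*(t:ℝ))) := by
          rw [Finset.sum_const, Nat.card_Icc]
          simp [nsmul_eq_mul]
      _ ≤ ENNReal.ofReal ε := by
          rw [← ENNReal.ofReal_natCast t, ← ENNReal.ofReal_mul (by positivity)]
          apply ENNReal.ofReal_le_ofReal
          rw [show (t:ℝ) * (ε/(2*(t:ℝ))) = ε/2 from by field_simp]
          linarith
  have hfinal : ENNReal.ofReal (1-ε) ≤ boost μ k Tset := by
    calc ENNReal.ofReal (1-ε) = 1 - ENNReal.ofReal ε := by
          rw [ENNReal.ofReal_sub 1 hε.le, ENNReal.ofReal_one]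
      _ ≤ 1 - boost μ k Tsetᶜ := tsub_le_tsub_left hcompl 1
      _ = boost μ k (Tsetᶜᶜ) := (prob_compl_eq_one_sub (measAll _)).symm
      _ = boost μ k Tset := by rw [compl_compl]
  have hfin2 := ENNReal.toReal_mono (measure_ne_top _ _) hfinal
  rwa [ENNReal.toReal_ofReal (by linarith)] at hfin2
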